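/- Let a and b be coprime positive integers with ab even, and let n ≥ 3 be odd. Then Σ over even m with 0 ≤ m ≤ 2ab of sin(mπ/a)·sin(mπ/b)·exp(−n·m²·πi/(4ab)) = 0. -/

import Mathlib

open Finset Complex

/-- `exp(π i t / d)`. -/
noncomputable def Ee (d : ℕ) (t : ℤ) : ℂ :=
  Complex.exp ((Real.pi : ℂ) * Complex.I * t / d)

lemma Ee_add (d : ℕ) (s t : ℤ) : Ee d (s + t) = Ee d s * Ee d t := by
  rw [Ee, Ee, Ee, ← Complex.exp_add]
  congr 1
  push_cast
  ring

lemma Ee_two_mul (d : ℕ) (hd : d ≠ 0) (m : ℤ) : Ee d (2 * d * m) = 1 := by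
  have hd' : (d : ℂ) ≠ 0 := Nat.cast_ne_zero.mpr hd
  rw [Ee, show (Real.pi : ℂ) * Complex.I * ((2 * (d:ℤ) * m : ℤ) : ℂ) / d
      = (m : ℂ) * (2 * (Real.pi : ℂ) * Complex.I) by push_cast; field_simp]
  exact Complex.exp_int_mul_two_pi_mul_I m

lemma Ee_congr {d : ℕ} (hd : d ≠ 0) {s t : ℤ} (h : (2 * d : ℤ) ∣ (s - t)) :
    Ee d s = Ee d t := by
  obtain ⟨m, hm⟩ := h
  have hs : s = t + 2 * d * m := by linarith
  rw [hs, Ee_add, Ee_two_mul d hd, mul_one]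

lemma Ee_scale (a b : ℕ) (ha : a ≠ 0) (hb : b ≠ 0) (t : ℤ) :
    Ee a t = Ee (a * b) (t * b) := by
  rw [Ee, Ee]
  congr 1
  have ha' : (a : ℂ) ≠ 0 := Nat.cast_ne_zero.mpr ha
  have hb' : (b : ℂ) ≠ 0 := Nat.cast_ne_zero.mpr hb
  push_cast
  field_simp

/-- if `k ≡ r` or `k ≡ -r (mod N)` with `N` even, then `exp(-π i n k²/N) = exp(-π i n r²/N)`. -/
lemma Ee_sq_congr {N : ℕ} (hN : N ≠ 0) (hNe : Even N) (n : ℤ) {k r : ℤ}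
    (h : (N : ℤ) ∣ (k - r) ∨ (N : ℤ) ∣ (k + r)) :
    Ee N (-n * k ^ 2) = Ee N (-n * r ^ 2) := by
  obtain ⟨e, he⟩ := hNe
  have heZ : (N : ℤ) = e + e := by exact_mod_cast congrArg (Nat.cast : ℕ → ℤ) he
  rcases h with ⟨q, hq⟩ | ⟨q, hq⟩
  · have hk : k = r + (N : ℤ) * q := by linarith
    subst hk
    refine Ee_congr hN ⟨-n * (q * r + e * q ^ 2), ?_⟩
    rw [heZ]; ring
  · have hk : k = -r + (N : ℤ) * q := by linarith
    subst hk
    refine Ee_congr hN ⟨n * (q * r - e * q ^ 2), ?_⟩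
    rw [heZ]; ring

lemma sin_two_mod (d k : ℕ) :
    Real.sin (2 * k * Real.pi / d) = Real.sin (2 * ((k % d : ℕ) : ℝ) * Real.pi / d) := by
  rcases eq_or_ne d 0 with rfl | hd
  · simp
  · have hd' : (d : ℝ) ≠ 0 := Nat.cast_ne_zero.mpr hd
    conv_lhs => rw [← Nat.mod_add_div k d]
    rw [show (2 * ((k % d + d * (k / d) : ℕ) : ℝ) * Real.pi / d)
        = 2 * (k % d : ℕ) * Real.pi / d + (k / d : ℕ) * (2 * Real.pi) by
      push_cast; field_simp]
    exact Real.sin_add_nat_mul_two_pi _ _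

lemma sin_two_congr (d : ℕ) {k k' : ℕ} (h : k % d = k' % d) :
    Real.sin (2 * k * Real.pi / d) = Real.sin (2 * k' * Real.pi / d) := by
  rw [sin_two_mod d k, sin_two_mod d k', h]

/-- summand of the one-variable Gauss-type sum. -/
noncomputable def Gg (d c n : ℕ) (x : ℕ) : ℂ :=
  ((Real.sin (2 * (c * x : ℕ) * Real.pi / d) : ℝ) : ℂ) * Ee d (-((n * c : ℕ) : ℤ) * (x : ℤ) ^ 2)

/-- the key vanishing: if `d` is even, the Gauss-type sum vanishes, by the
involution `x ↦ (d - x) % d`. -/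
lemma Gg_sum_zero (d c n : ℕ) (hd0 : 0 < d) (hde : Even d) :
    ∑ x ∈ range d, Gg d c n x = 0 := by
  have hd : d ≠ 0 := hd0.ne'
  have hd' : (d : ℝ) ≠ 0 := Nat.cast_ne_zero.mpr hd
  -- key : reflection negates the summand
  have key : ∀ x : ℕ, 0 < x → x < d → Gg d c n (d - x) = -Gg d c n x := by
    intro x hx0 hxd
    have hxle : x ≤ d := hxd.le
    have hsin : Real.sin (2 * ((c * (d - x) : ℕ) : ℝ) * Real.pi / d)
        = -Real.sin (2 * ((c * x : ℕ) : ℝ) * Real.pi / d) := by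
      have hcast : ((d - x : ℕ) : ℝ) = (d : ℝ) - x := by
        push_cast [Nat.cast_sub hxle]; ring
      rw [show (2 * ((c * (d - x) : ℕ) : ℝ) * Real.pi / d)
          = -(2 * ((c * x : ℕ) : ℝ) * Real.pi / d) + (c : ℕ) * (2 * Real.pi) by
        push_cast [hcast]; field_simp; ring]
      rw [Real.sin_add_nat_mul_two_pi, Real.sin_neg]
    have hEe : Ee d (-((n * c : ℕ) : ℤ) * ((d - x : ℕ) : ℤ) ^ 2)
        = Ee d (-((n * c : ℕ) : ℤ) * (x : ℤ) ^ 2) := by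
      refine Ee_sq_congr hd hde _ (Or.inr ⟨1, ?_⟩)
      have : ((d - x : ℕ) : ℤ) = (d : ℤ) - x := by
        push_cast [Nat.cast_sub hxle]; ring
      rw [this]; ring
    rw [Gg, Gg, hsin, hEe]
    push_cast
    ring
  have h1 : ∀ x (hx : x ∈ range d), Gg d c n x + Gg d c n ((d - x) % d) = 0 := by
    intro x hx
    simp only [mem_range] at hx
    rcases Nat.eq_zero_or_pos x with rfl | hx0
    · have e1 : (d - 0) % d = 0 := by simp
      rw [e1]
      have : Gg d c n 0 = 0 := by simp [Gg]
      rw [this]; ring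
    · have e1 : (d - x) % d = d - x := Nat.mod_eq_of_lt (by omega)
      rw [e1, key x hx0 hx]; ring
  have h2 : ∀ x (hx : x ∈ range d), Gg d c n x ≠ 0 → (d - x) % d ≠ x := by
    intro x hx hfx hgx
    simp only [mem_range] at hx
    rcases Nat.eq_zero_or_pos x with rfl | hx0
    · exact hfx (by simp [Gg])
    · have e1 : (d - x) % d = d - x := Nat.mod_eq_of_lt (by omega)
      rw [e1] at hgx
      have hd2 : d = 2 * x := by omega
      apply hfx
      have : Real.sin (2 * ((c * x : ℕ) : ℝ) * Real.pi / d) = 0 := by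
        have hx' : (x : ℝ) ≠ 0 := Nat.cast_ne_zero.mpr hx0.ne'
        rw [show (2 * ((c * x : ℕ) : ℝ) * Real.pi / d) = (c : ℕ) * Real.pi by
          rw [hd2]; push_cast; field_simp]
        exact Real.sin_nat_mul_pi c
      unfold Gg
      rw [this]
      simp
  have h3 : ∀ x (hx : x ∈ range d), (d - x) % d ∈ range d := by
    intro x _
    simp only [mem_range]
    exact Nat.mod_lt _ hd0
  have h4 : ∀ x (hx : x ∈ range d), (d - ((d - x) % d)) % d = x := by
    intro x hx
    simp only [mem_range] at hx
    rcases Nat.eq_zero_or_pos x with rfl | hx0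
    · simp
    · have e1 : (d - x) % d = d - x := Nat.mod_eq_of_lt (by omega)
      rw [e1, Nat.sub_sub_self hx.le]
      exact Nat.mod_eq_of_lt hx
  exact Finset.sum_involution (fun x _ => (d - x) % d) h1 h2 h3 h4

/-- summand of the two-variable sum. -/
noncomputable def Tk (a b n : ℕ) (k : ℕ) : ℂ :=
  ((Real.sin (2 * k * Real.pi / a) : ℝ) : ℂ) * ((Real.sin (2 * k * Real.pi / b) : ℝ) : ℂ) *
    Ee (a * b) (-(n : ℤ) * (k : ℤ) ^ 2)

lemma Tk_mod (a b n : ℕ) (ha : 0 < a) (hb : 0 < b) (hab : Even (a * b)) (k : ℕ) :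
    Tk a b n k = Tk a b n (k % (a * b)) := by
  have hN : a * b ≠ 0 := by positivity
  have h1 : Real.sin (2 * k * Real.pi / a) = Real.sin (2 * ((k % (a * b) : ℕ) : ℝ) * Real.pi / a) :=
    sin_two_congr a (by
      rw [Nat.mod_mod_of_dvd _ ⟨b, rfl⟩])
  have h2 : Real.sin (2 * k * Real.pi / b) = Real.sin (2 * ((k % (a * b) : ℕ) : ℝ) * Real.pi / b) :=
    sin_two_congr b (by
      rw [Nat.mod_mod_of_dvd _ ⟨a, mul_comm a b⟩])
  have h3 : Ee (a * b) (-(n : ℤ) * (k : ℤ) ^ 2)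
      = Ee (a * b) (-(n : ℤ) * ((k % (a * b) : ℕ) : ℤ) ^ 2) := by
    refine Ee_sq_congr hN hab _ (Or.inl ⟨(k / (a * b) : ℕ), ?_⟩)
    have h := Nat.mod_add_div k (a * b)
    have h' : ((k % (a * b) : ℕ) : ℤ) + ((a * b : ℕ) : ℤ) * ((k / (a * b) : ℕ) : ℤ) = (k : ℤ) := by
      exact_mod_cast h
    push_cast at h' ⊢
    linarith
  rw [Tk, Tk, h1, h2, h3]

lemma Tk_factor (a b n : ℕ) (ha : 0 < a) (hb : 0 < b) (hab : Even (a * b)) (x y : ℕ) :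
    Tk a b n ((b * x + a * y) % (a * b)) = Gg a b n x * Gg b a n y := by
  rw [← Tk_mod a b n ha hb hab]
  have hN : a * b ≠ 0 := by positivity
  have h1 : Real.sin (2 * ((b * x + a * y : ℕ) : ℝ) * Real.pi / a)
      = Real.sin (2 * ((b * x : ℕ) : ℝ) * Real.pi / a) :=
    sin_two_congr a (Nat.add_mul_mod_self_left (b * x) a y)
  have h2 : Real.sin (2 * ((b * x + a * y : ℕ) : ℝ) * Real.pi / b)
      = Real.sin (2 * ((a * y : ℕ) : ℝ) * Real.pi / b) :=
    sin_two_congr b (by rw [Nat.add_comm]; exact Nat.add_mul_mod_self_left (a * y) b x)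
  have h3 : Ee (a * b) (-(n : ℤ) * ((b * x + a * y : ℕ) : ℤ) ^ 2)
      = Ee a (-((n * b : ℕ) : ℤ) * (x : ℤ) ^ 2) * Ee b (-((n * a : ℕ) : ℤ) * (y : ℤ) ^ 2) := by
    rw [Ee_scale a b ha.ne' hb.ne', Ee_scale b a hb.ne' ha.ne', mul_comm b a, ← Ee_add]
    refine Ee_congr hN ⟨-(n : ℤ) * x * y, ?_⟩
    push_cast
    ring
  rw [Tk, h1, h2, h3, Gg, Gg]
  ring

/-- CRT re-indexing of a sum over `range (a*b)`. -/
lemma sum_crt (a b : ℕ) (ha : 0 < a) (hb : 0 < b) (hcop : Nat.Coprime a b) (f : ℕ → ℂ) :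
    ∑ k ∈ range (a * b), f k
      = ∑ p ∈ range a ×ˢ range b, f ((b * p.1 + a * p.2) % (a * b)) := by
  haveI : NeZero a := ⟨ha.ne'⟩
  haveI : NeZero b := ⟨hb.ne'⟩
  set b' : ℕ := ((b : ZMod a)⁻¹).val with hb'def
  set a' : ℕ := ((a : ZMod b)⁻¹).val with ha'def
  have hbb' : b * b' ≡ 1 [MOD a] := by
    have h1 : ((b * b' : ℕ) : ZMod a) = ((1 : ℕ) : ZMod a) := by
      push_cast [hb'def, ZMod.natCast_val, ZMod.cast_id]
      exact ZMod.coe_mul_inv_eq_one b hcop.symm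
    exact (ZMod.natCast_eq_natCast_iff _ _ _).mp h1
  have haa' : a * a' ≡ 1 [MOD b] := by
    have h1 : ((a * a' : ℕ) : ZMod b) = ((1 : ℕ) : ZMod b) := by
      push_cast [ha'def, ZMod.natCast_val, ZMod.cast_id]
      exact ZMod.coe_mul_inv_eq_one a hcop
    exact (ZMod.natCast_eq_natCast_iff _ _ _).mp h1
  have hN : 0 < a * b := by positivity
  have hleft : ∀ k ∈ range (a * b), (b * ((b' * k) % a) + a * ((a' * k) % b)) % (a * b) = k := by
    intro k hk
    simp only [mem_range] at hk
    set u := b * ((b' * k) % a) + a * ((a' * k) % b) with hu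
    have hua : u ≡ k [MOD a] := by
      calc u ≡ b * (b' * k) + a * ((a' * k) % b) [MOD a] :=
            (Nat.ModEq.mul_left b (Nat.mod_modEq _ _)).add_right _
        _ ≡ b * (b' * k) + 0 [MOD a] :=
            Nat.ModEq.add_left _ (Nat.modEq_zero_iff_dvd.mpr ⟨(a' * k) % b, rfl⟩)
        _ = (b * b') * k := by ring
        _ ≡ 1 * k [MOD a] := hbb'.mul_right k
        _ = k := one_mul k
    have hub : u ≡ k [MOD b] := by
      calc u ≡ b * ((b' * k) % a) + a * (a' * k) [MOD b] :=
            Nat.ModEq.add_left _ (Nat.ModEq.mul_left a (Nat.mod_modEq _ _))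
        _ ≡ 0 + a * (a' * k) [MOD b] :=
            Nat.ModEq.add_right _ (Nat.modEq_zero_iff_dvd.mpr ⟨(b' * k) % a, rfl⟩)
        _ = (a * a') * k := by ring
        _ ≡ 1 * k [MOD b] := haa'.mul_right k
        _ = k := one_mul k
    have : u ≡ k [MOD a * b] := (Nat.modEq_and_modEq_iff_modEq_mul hcop).mp ⟨hua, hub⟩
    calc u % (a * b) = k % (a * b) := this
      _ = k := Nat.mod_eq_of_lt hk
  refine Finset.sum_nbij' (fun k => ((b' * k) % a, (a' * k) % b))
    (fun p => (b * p.1 + a * p.2) % (a * b)) ?_ ?_ (fun k hk => hleft k hk) ?_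
    (fun k hk => (congrArg f (hleft k hk)).symm)
  · intro k hk
    simp only [mem_product, mem_range]
    exact ⟨Nat.mod_lt _ ha, Nat.mod_lt _ hb⟩
  · intro p hp
    simp only [mem_range]
    exact Nat.mod_lt _ hN
  · -- right_inv
    intro p hp
    simp only [mem_product, mem_range] at hp
    obtain ⟨hx, hy⟩ := hp
    set k := (b * p.1 + a * p.2) % (a * b) with hkdef
    have hka : k ≡ b * p.1 + a * p.2 [MOD a] :=
      (Nat.mod_modEq _ _).of_dvd ⟨b, rfl⟩
    have hkb : k ≡ b * p.1 + a * p.2 [MOD b] :=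
      (Nat.mod_modEq _ _).of_dvd ⟨a, mul_comm a b⟩
    have h1 : (b' * k) % a = p.1 := by
      have : b' * k ≡ p.1 [MOD a] := by
        calc b' * k ≡ b' * (b * p.1 + a * p.2) [MOD a] := Nat.ModEq.mul_left b' hka
          _ = (b * b') * p.1 + a * (b' * p.2) := by ring
          _ ≡ (b * b') * p.1 + 0 [MOD a] :=
              Nat.ModEq.add_left _ (Nat.modEq_zero_iff_dvd.mpr ⟨b' * p.2, rfl⟩)
          _ = (b * b') * p.1 + 0 := rfl
          _ ≡ 1 * p.1 + 0 [MOD a] := (hbb'.mul_right p.1).add_right 0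
          _ = p.1 := by ring
      calc (b' * k) % a = p.1 % a := this
        _ = p.1 := Nat.mod_eq_of_lt hx
    have h2 : (a' * k) % b = p.2 := by
      have : a' * k ≡ p.2 [MOD b] := by
        calc a' * k ≡ a' * (b * p.1 + a * p.2) [MOD b] := Nat.ModEq.mul_left a' hkb
          _ = (a * a') * p.2 + b * (a' * p.1) := by ring
          _ ≡ (a * a') * p.2 + 0 [MOD b] :=
              Nat.ModEq.add_left _ (Nat.modEq_zero_iff_dvd.mpr ⟨a' * p.1, rfl⟩)
          _ = (a * a') * p.2 + 0 := rfl
          _ ≡ 1 * p.2 + 0 [MOD b] := (haa'.mul_right p.2).add_right 0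
          _ = p.2 := by ring
      calc (a' * k) % b = p.2 % b := this
        _ = p.2 := Nat.mod_eq_of_lt hy
    exact Prod.ext h1 h2

/-- For coprime positive integers `a, b` with `ab` even and odd `n ≥ 3`,
the sum over even `m` with `0 ≤ m ≤ 2ab` of
`sin(mπ/a)·sin(mπ/b)·exp(-n m² πi/(4ab))` vanishes. -/
theorem sum_even_sin_sin_exp_ab_even (a b n : ℕ) (ha : 0 < a) (hb : 0 < b)
    (hcop : Nat.Coprime a b) (hab : Even (a * b)) (hodd : Odd n) (hn : 3 ≤ n) :
    ∑ m ∈ (Finset.range (2 * a * b + 1)).filter (fun m => Even m),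
        (Real.sin (m * Real.pi / a) * Real.sin (m * Real.pi / b) : ℂ) *
          Complex.exp (-(n : ℂ) * (m : ℂ) ^ 2 * Real.pi * Complex.I / (4 * a * b))
      = 0 := by
  have hN : 0 < a * b := by positivity
  have ha' : (a : ℂ) ≠ 0 := Nat.cast_ne_zero.mpr ha.ne'
  have hb' : (b : ℂ) ≠ 0 := Nat.cast_ne_zero.mpr hb.ne'
  -- Step 1: reindex over even m = 2k
  have himg : (Finset.range (2 * a * b + 1)).filter (fun m => Even m)
      = (Finset.range (a * b + 1)).image (fun k => 2 * k) := by
    ext m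
    have hassoc : 2 * a * b = 2 * (a * b) := mul_assoc 2 a b
    simp only [mem_filter, mem_range, mem_image, Nat.even_iff]
    constructor
    · rintro ⟨hm, hdvd⟩
      exact ⟨m / 2, by omega, by omega⟩
    · rintro ⟨k, hk, rfl⟩
      exact ⟨by omega, by omega⟩
  rw [himg, Finset.sum_image (by intro x _ y _ h; simp only at h; omega)]
  have hterm : ∀ k ∈ Finset.range (a * b + 1),
      (Real.sin ((2 * k : ℕ) * Real.pi / a) * Real.sin ((2 * k : ℕ) * Real.pi / b) : ℂ) *
        Complex.exp (-(n : ℂ) * ((2 * k : ℕ) : ℂ) ^ 2 * Real.pi * Complex.I / (4 * a * b))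
      = Tk a b n k := by
    intro k _
    rw [Tk]
    have e1 : Complex.exp (-(n : ℂ) * ((2 * k : ℕ) : ℂ) ^ 2 * Real.pi * Complex.I / (4 * a * b))
        = Ee (a * b) (-(n : ℤ) * (k : ℤ) ^ 2) := by
      rw [Ee]
      congr 1
      push_cast
      field_simp
      ring
    rw [e1]
    push_cast
    ring
  rw [Finset.sum_congr rfl hterm, Finset.sum_range_succ]
  -- the k = a*b term vanishes
  have hlast : Tk a b n (a * b) = 0 := by
    have : Real.sin (2 * ((a * b : ℕ) : ℝ) * Real.pi / a) = 0 := by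
      rw [sin_two_mod a (a * b), Nat.mul_mod_right]
      simp
    unfold Tk
    rw [this]
    simp
  rw [hlast, add_zero]
  -- CRT factorization
  rw [sum_crt a b ha hb hcop]
  have : ∑ p ∈ range a ×ˢ range b, Tk a b n ((b * p.1 + a * p.2) % (a * b))
      = (∑ x ∈ range a, Gg a b n x) * (∑ y ∈ range b, Gg b a n y) := by
    rw [Finset.sum_mul_sum]
    rw [Finset.sum_product]
    exact Finset.sum_congr rfl fun x _ =>
      Finset.sum_congr rfl fun y _ => Tk_factor a b n ha hb hab x y
  rw [this]
  rcases Nat.even_mul.mp hab with hae | hbe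
  · rw [Gg_sum_zero a b n ha hae, zero_mul]
  · rw [Gg_sum_zero b a n hb hbe, mul_zero]
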